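/- Let G be a finite group and let x ∈ G be an element whose order is a power of 3. Then x is inverse semi-rational in G if and only if there exists a Sylow 3-subgroup P of G with x ∈ P such that x is inverse semi-rational in P. -/

import Mathlib

def IsInvSemiRational {G : Type*} [Group G] (x : G) : Prop :=
  ∀ k : ℤ, IsCoprime k (orderOf x : ℤ) → IsConj x (x ^ k) ∨ IsConj x⁻¹ (x ^ k)

private lemma four_pow_pow (m : ℕ) :
    (4:ℤ) ^ (3 ^ m) ≡ 1 + 3 ^ (m+1) [ZMOD 3 ^ (m+2)] := by
  induction m with
  | zero => decide
  | succ m ih =>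
    obtain ⟨c, hc⟩ := Int.modEq_iff_dvd.mp ih
    have hv : (4:ℤ) ^ (3 ^ m) = 1 + 3 ^ (m+1) - 3 ^ (m+2) * c := by linarith
    have h4 : (4:ℤ) ^ (3 ^ (m+1)) = ((4:ℤ) ^ (3 ^ m)) ^ 3 := by
      rw [pow_succ, pow_mul]
    rw [Int.modEq_iff_dvd, h4, hv]
    exact ⟨c - 3 ^ m * (1 - 3*c) ^ 2 - (3 ^ m) ^ 2 * (1 - 3*c) ^ 3, by ring⟩

private lemma four_pow_one (m : ℕ) : (4:ℤ) ^ (3 ^ m) ≡ 1 [ZMOD 3 ^ (m+1)] := by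
  have hdvd : ((3:ℤ) ^ (m+1)) ∣ (3:ℤ) ^ (m+2) := pow_dvd_pow 3 (by omega)
  have h := (four_pow_pow m).of_dvd hdvd
  exact h.trans (Int.modEq_iff_dvd.mpr ⟨-1, by ring⟩)

private lemma four_pow_surj : ∀ (n : ℕ) (k : ℤ), k ≡ 1 [ZMOD 3] →
    ∃ t : ℕ, (4:ℤ) ^ t ≡ k [ZMOD 3 ^ n] := by
  intro n
  induction n with
  | zero => intro k _; exact ⟨0, by simp [Int.ModEq]⟩
  | succ n ih =>
    match n, ih with
    | 0, _ =>
      intro k hk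
      exact ⟨0, by simpa using hk.symm⟩
    | (N+1), ih =>
      intro k hk
      obtain ⟨t, ht⟩ := ih k hk
      obtain ⟨c, hc⟩ := Int.modEq_iff_dvd.mp ht
      obtain ⟨d, hd⟩ := Int.modEq_iff_dvd.mp (four_pow_pow N)
      have h41 : (4:ℤ) ^ t ≡ 1 [ZMOD 3] := by
        simpa using (Int.ModEq.pow t (by decide : (4:ℤ) ≡ 1 [ZMOD 3]))
      obtain ⟨u, hu⟩ := Int.modEq_iff_dvd.mp h41
      have hF : (4:ℤ) ^ (3 ^ N) = 1 + 3 ^ (N+1) - 3 ^ (N+2) * d := by linarith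
      have he : (4:ℤ) ^ t = 1 - 3 * u := by linarith
      have hk2 : k = (4:ℤ) ^ t + 3 ^ (N+1) * c := by linarith
      have hj : c % 3 = 0 ∨ c % 3 = 1 ∨ c % 3 = 2 := by omega
      rcases hj with hj | hj | hj
      · obtain ⟨c', hc'⟩ : ∃ c', c = 3 * c' := ⟨c / 3, by omega⟩
        exact ⟨t, Int.modEq_iff_dvd.mpr ⟨c', by rw [hk2, hc']; ring⟩⟩
      · obtain ⟨c', hc'⟩ : ∃ c', c = 3 * c' + 1 := ⟨c / 3, by omega⟩
        have hsplit : (4:ℤ) ^ (t + 3 ^ N * 1) = 4 ^ t * ((4:ℤ) ^ (3 ^ N)) ^ 1 := by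
          rw [pow_add, pow_mul]
        refine ⟨t + 3 ^ N * 1, Int.modEq_iff_dvd.mpr
          ⟨c' + u + (4:ℤ) ^ t * d, ?_⟩⟩
        rw [hsplit, hk2, hc', hF, he]; ring
      · obtain ⟨c', hc'⟩ : ∃ c', c = 3 * c' + 2 := ⟨c / 3, by omega⟩
        have hsplit : (4:ℤ) ^ (t + 3 ^ N * 2) = 4 ^ t * ((4:ℤ) ^ (3 ^ N)) ^ 2 := by
          rw [pow_add, pow_mul]
        refine ⟨t + 3 ^ N * 2, Int.modEq_iff_dvd.mpr
          ⟨c' + 2*d + 2*u - 6*u*d - 3 ^ N * (4:ℤ) ^ t * (1 - 3*d) ^ 2, ?_⟩⟩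
        rw [hsplit, hk2, hc', hF, he]; ring

private lemma key_lemma {N m : ℕ} (hm : Nat.Coprime 3 m) (k : ℤ) (hk : k ≡ 1 [ZMOD 3]) :
    ∃ t : ℕ, (4:ℤ) ^ (m * t) ≡ k [ZMOD 3 ^ (N+1)] := by
  obtain ⟨t₀, ht₀⟩ := four_pow_surj (N+1) k hk
  rcases Nat.eq_zero_or_pos N with hN | hN
  · subst hN
    refine ⟨0, ?_⟩
    simpa using hk.symm
  · have hcop : Nat.Coprime m (3 ^ N) := (hm.symm).pow_right N
    obtain ⟨m', -, hm'⟩ := Nat.exists_mul_mod_eq_one_of_coprime hcop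
      (Nat.one_lt_pow hN.ne' (by norm_num))
    have hq : m * m' = 3 ^ N * (m * m' / 3 ^ N) + 1 := by
      conv_lhs => rw [← Nat.div_add_mod (m * m') (3 ^ N)]
      rw [hm']
    set q := m * m' / 3 ^ N with hqdef
    refine ⟨t₀ * m', ?_⟩
    have hexp : m * (t₀ * m') = t₀ + 3 ^ N * (q * t₀) := by
      calc m * (t₀ * m') = (m * m') * t₀ := by ring
        _ = t₀ + 3 ^ N * (q * t₀) := by rw [hq]; ring
    have hsplit : (4:ℤ) ^ (m * (t₀ * m')) = 4 ^ t₀ * ((4:ℤ) ^ (3 ^ N)) ^ (q * t₀) := by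
      rw [hexp, pow_add, pow_mul]
    rw [hsplit]
    have h1 : ((4:ℤ) ^ (3 ^ N)) ^ (q * t₀) ≡ 1 [ZMOD 3 ^ (N+1)] := by
      simpa using (four_pow_one N).pow (q * t₀)
    calc (4:ℤ) ^ t₀ * ((4:ℤ) ^ (3 ^ N)) ^ (q * t₀)
        ≡ 4 ^ t₀ * 1 [ZMOD 3 ^ (N+1)] := (Int.ModEq.refl _).mul h1
      _ = 4 ^ t₀ := mul_one _
      _ ≡ k [ZMOD 3 ^ (N+1)] := ht₀

private lemma conj_pow_iter {G : Type*} [Group G] {g x : G} {e : ℕ}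
    (h : g * x * g⁻¹ = x ^ e) (t : ℕ) : g ^ t * x * (g ^ t)⁻¹ = x ^ (e ^ t) := by
  induction t with
  | zero => simp
  | succ t ih =>
    have hstep : g ^ (t+1) * x * (g ^ (t+1))⁻¹ = g * (g ^ t * x * (g ^ t)⁻¹) * g⁻¹ := by
      group
    rw [hstep, ih, ← conj_pow, h, ← pow_mul, ← pow_succ']

private lemma isPGroup_zpowers {G : Type*} [Group G] {p a : ℕ} {x : G}
    (h : orderOf x = p ^ a) : IsPGroup p (Subgroup.zpowers x) := by
  intro g
  refine ⟨a, ?_⟩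
  have hcoe : ((g : G)) ^ (p ^ a) = 1 := by
    obtain ⟨i, hi⟩ := Subgroup.mem_zpowers_iff.mp g.2
    rw [← hi, ← zpow_natCast ((x : G) ^ i), ← zpow_mul, mul_comm, zpow_mul,
      zpow_natCast, ← h, pow_orderOf_eq_one, one_zpow]
  exact Subtype.ext (by simpa using hcoe)

theorem three_element_isr_iff_isr_in_sylow (G : Type) [Group G] [Finite G] (x : G)
    (hx : ∃ n : ℕ, orderOf x = 3 ^ n) :
    IsInvSemiRational x ↔
      ∃ (P : Sylow 3 G) (hxP : x ∈ P),
        IsInvSemiRational (⟨x, hxP⟩ : (P : Subgroup G)) := by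
  obtain ⟨n, hn⟩ := hx
  constructor
  · intro hisr
    rcases n with _ | N
    · -- x = 1
      have hx1 : x = 1 := orderOf_eq_one_iff.mp (by simpa using hn)
      obtain ⟨P⟩ := (inferInstance : Nonempty (Sylow 3 G))
      have hxP : x ∈ (P : Subgroup G) := by rw [hx1]; exact one_mem _
      refine ⟨P, hxP, fun k _ => Or.inl ?_⟩
      have h1 : (⟨x, hxP⟩ : (P : Subgroup G)) = 1 := Subtype.ext (by simp [hx1])
      rw [h1, one_zpow]
    · have hord : orderOf x = 3 ^ (N+1) := hn
      -- Step 1: get g with g x g⁻¹ = x ^ (4 ^ s), s coprime to 3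
      have h4c : IsCoprime (4 : ℤ) ((orderOf x : ℕ) : ℤ) := by
        rw [hord]
        push_cast
        exact (by norm_num : IsCoprime (4:ℤ) 3).pow_right
      obtain ⟨g, s, hs, hgs⟩ : ∃ (g : G) (s : ℕ), Nat.Coprime 3 s ∧
          g * x * g⁻¹ = x ^ (4 ^ s) := by
        rcases hisr 4 h4c with hc | hc
        · obtain ⟨c, hc⟩ := isConj_iff.mp hc
          refine ⟨c, 1, by norm_num, ?_⟩
          rw [hc]
          norm_cast
        · obtain ⟨c, hc⟩ := isConj_iff.mp hc
          have h1 : c * x * c⁻¹ = x ^ (-4 : ℤ) := by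
            rw [zpow_neg, ← hc]; group
          refine ⟨c * c, 2, by norm_num, ?_⟩
          calc (c*c) * x * (c*c)⁻¹ = c * (c * x * c⁻¹) * c⁻¹ := by group
            _ = c * x ^ (-4:ℤ) * c⁻¹ := by rw [h1]
            _ = (c * x * c⁻¹) ^ (-4:ℤ) := conj_zpow.symm
            _ = (x ^ (-4:ℤ)) ^ (-4:ℤ) := by rw [h1]
            _ = x ^ (16:ℤ) := by rw [← zpow_mul]; norm_num
            _ = x ^ (4 ^ 2 : ℕ) := by norm_cast
      -- Step 2: extract a 3-element h conjugating x to x ^ (4 ^ m)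
      have hgo : orderOf g ≠ 0 := (orderOf_pos g).ne'
      set w := ordCompl[3] (orderOf g) with hw
      have hwdvd : w ∣ orderOf g := Nat.ordCompl_dvd _ _
      have hw3 : Nat.Coprime 3 w := Nat.coprime_ordCompl (by norm_num) hgo
      have hwpos : 0 < w := Nat.ordCompl_pos 3 hgo
      set h := g ^ w with hh
      have horder : orderOf h = 3 ^ ((orderOf g).factorization 3) := by
        rw [hh, orderOf_pow, Nat.gcd_eq_right hwdvd]
        exact Nat.div_eq_of_eq_mul_left hwpos
          (Nat.ordProj_mul_ordCompl_eq_self (orderOf g) 3).symm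
      set m := s * w with hm
      have hm3 : Nat.Coprime 3 m := hs.mul_right hw3
      have hconjh : h * x * h⁻¹ = x ^ (4 ^ m) := by
        have hiter := conj_pow_iter hgs w
        rwa [← pow_mul] at hiter
      -- Step 3: h normalizes ⟨x⟩
      have hnorm : h ∈ Subgroup.normalizer (Subgroup.zpowers x : Set G) := by
        apply Subgroup.mem_normalizer_fintype
        intro y hy
        obtain ⟨i, hi⟩ := Subgroup.mem_zpowers_iff.mp hy
        rw [← hi, show h * x ^ i * h⁻¹ = (h * x * h⁻¹) ^ i from conj_zpow.symm,
          hconjh, ← zpow_natCast, ← zpow_mul]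
        exact Subgroup.zpow_mem _ (Subgroup.mem_zpowers x) _
      -- Step 4: the subgroup generated by h and x is a 3-group inside some Sylow P
      have hPQ : IsPGroup 3 ((Subgroup.zpowers h ⊔ Subgroup.zpowers x : Subgroup G)) :=
        IsPGroup.to_sup_of_normal_right' (isPGroup_zpowers horder) (isPGroup_zpowers hord)
          ((Subgroup.zpowers_le).mpr hnorm)
      obtain ⟨P, hQP⟩ := hPQ.exists_le_sylow
      have hxP : x ∈ P := hQP (Subgroup.mem_sup_right (Subgroup.mem_zpowers x))
      have hhP : h ∈ P := hQP (Subgroup.mem_sup_left (Subgroup.mem_zpowers h))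
      refine ⟨P, hxP, ?_⟩
      intro k hk
      set X : (P : Subgroup G) := ⟨x, hxP⟩ with hX
      set Hh : (P : Subgroup G) := ⟨h, hhP⟩ with hHdef
      have hXo : orderOf X = 3 ^ (N+1) := by rw [hX, Subgroup.orderOf_mk, hord]
      have hHX : Hh * X * Hh⁻¹ = X ^ (4 ^ m) := by
        apply Subtype.ext
        push_cast
        exact hconjh
      -- coprimality analysis
      have hXo' : IsCoprime k ((3:ℤ) ^ (N+1)) := by
        have := hk
        rw [hXo] at this
        exact_mod_cast this
      have hco : IsCoprime k (3:ℤ) :=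
        IsCoprime.of_isCoprime_of_dvd_right hXo' (dvd_pow_self 3 (Nat.succ_ne_zero N))
      have h3k : ¬ (3:ℤ) ∣ k := by
        intro hdvd
        have := hco.isUnit_of_dvd' hdvd dvd_rfl
        rw [Int.isUnit_iff] at this
        omega
      have hk3 : k % 3 = 1 ∨ k % 3 = 2 := by omega
      rcases hk3 with hk3 | hk3
      · obtain ⟨t, ht⟩ := key_lemma (N := N) hm3 k (show k % 3 = 1 % 3 by omega)
        left
        rw [isConj_iff]
        refine ⟨Hh ^ t, ?_⟩
        rw [conj_pow_iter hHX t, ← zpow_natCast, zpow_eq_zpow_iff_modEq, hXo]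
        push_cast
        rwa [← pow_mul]
      · obtain ⟨t, ht⟩ := key_lemma (N := N) hm3 (-k) (show (-k) % 3 = 1 % 3 by omega)
        right
        rw [isConj_iff]
        refine ⟨Hh ^ t, ?_⟩
        have hXk : X ^ ((4 ^ m) ^ t) = X ^ (-k) := by
          rw [← zpow_natCast, zpow_eq_zpow_iff_modEq, hXo]
          push_cast
          rwa [← pow_mul]
        calc Hh ^ t * X⁻¹ * (Hh ^ t)⁻¹ = (Hh ^ t * X * (Hh ^ t)⁻¹)⁻¹ := by group
          _ = (X ^ ((4 ^ m) ^ t))⁻¹ := by rw [conj_pow_iter hHX t]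
          _ = (X ^ (-k))⁻¹ := by rw [hXk]
          _ = X ^ k := by rw [← zpow_neg, neg_neg]
  · rintro ⟨P, hxP, hP⟩ k hk
    have hk' : IsCoprime k ((orderOf (⟨x, hxP⟩ : (P : Subgroup G)) : ℕ) : ℤ) := by
      rwa [Subgroup.orderOf_mk]
    rcases hP k hk' with hc | hc
    · left
      have := ((P : Subgroup G)).subtype.map_isConj hc
      simpa using this
    · right
      have := ((P : Subgroup G)).subtype.map_isConj hc
      simpa using this
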